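/- arXiv:1907.07088 — 2 statements merged into one kernel-verified Lean document; each statement's English description precedes it below -/
import Mathlib

section
/- Distinct parents in the same residue class 1 (mod 3) cannot share a child: if μ₁ > ν₁ are distinct even nonnegative integers and n < m are positive integers, then z_n + 4^n·μ₁ ≠ z_m + 4^m·ν₁. -/
theorem stmt_12 (μ₁ ν₁ : ℕ) (hμ₁ : Even μ₁) (hν₁ : Even ν₁) (hlt : ν₁ < μ₁)
    (n m : ℕ) (hn : 0 < n) (hnm : n < m) :
    (4 ^ n - 1) / 3 + 4 ^ n * μ₁ ≠ (4 ^ m - 1) / 3 + 4 ^ m * ν₁ := by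
  intro h
  have hdvd : ∀ k : ℕ, 3 ∣ 4 ^ k - 1 := by
    intro k
    simpa using Nat.sub_dvd_pow_sub_pow 4 1 k
  have h1 : ∀ k : ℕ, 1 ≤ 4 ^ k := fun k => Nat.one_le_pow _ _ (by norm_num)
  have h3 : 4 ^ n - 1 + 3 * (4 ^ n * μ₁) = 4 ^ m - 1 + 3 * (4 ^ m * ν₁) := by
    have := congrArg (3 * ·) h
    simp only [Nat.mul_add, Nat.mul_div_cancel' (hdvd n), Nat.mul_div_cancel' (hdvd m)] at this
    exact this
  have h4 : 4 ^ n * (1 + 3 * μ₁) = 4 ^ m * (1 + 3 * ν₁) := by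
    have e1 : 4 ^ n * (1 + 3 * μ₁) = 4 ^ n + 3 * (4 ^ n * μ₁) := by ring
    have e2 : 4 ^ m * (1 + 3 * ν₁) = 4 ^ m + 3 * (4 ^ m * ν₁) := by ring
    have := h1 n; have := h1 m
    omega
  have hm : m = n + (m - n) := by omega
  rw [hm, pow_add, mul_assoc] at h4
  have h5 : 1 + 3 * μ₁ = 4 ^ (m - n) * (1 + 3 * ν₁) :=
    Nat.eq_of_mul_eq_mul_left (Nat.pos_of_ne_zero (by positivity)) h4
  have hk : m - n = (m - n - 1) + 1 := by omega
  rw [hk, pow_succ] at h5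
  have e3 : 4 ^ (m - n - 1) * 4 * (1 + 3 * ν₁)
      = 2 * (2 * (4 ^ (m - n - 1) * (1 + 3 * ν₁))) := by ring
  obtain ⟨a, ha⟩ := hμ₁
  omega
end

section
/- If u and w are odd positive integers, both ≢ 0 (mod 3), and for some positive integers n, m the n-th child of u equals the m-th child of w (children defined via the inverse Collatz map), then u = w and n = m. -/
/-- The n-th child of an odd parent `u ≢ 0 (mod 3)` under the inverse Collatz map. -/
def invCollatzChild (u n : ℕ) : ℕ :=
  if u % 3 = 1 then (2 ^ (2 * n) * u - 1) / 3 else (2 ^ (2 * n - 1) * u - 1) / 3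

lemma pow2_even_mod3 (n : ℕ) : 2 ^ (2 * n) % 3 = 1 := by
  rw [pow_mul, Nat.pow_mod]; simp

lemma pow2_odd_mod3 (n : ℕ) (hn : 0 < n) : 2 ^ (2 * n - 1) % 3 = 2 := by
  obtain ⟨k, rfl⟩ := Nat.exists_eq_add_of_lt hn
  have : 2 * (k + 1) - 1 = 2 * k + 1 := by ring_nf; omega
  rw [show (0 + k + 1) = k + 1 by omega, this, pow_succ, Nat.mul_mod,
    pow2_even_mod3 k]

/-- Reconstruction: 3 * child + 1 = 2^e * u. -/
lemma key (u n : ℕ) (hu3 : u % 3 ≠ 0) (hn : 0 < n) :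
    3 * invCollatzChild u n + 1 =
      2 ^ (if u % 3 = 1 then 2 * n else 2 * n - 1) * u := by
  have hu := Nat.mod_lt u (show 0 < 3 by norm_num)
  unfold invCollatzChild
  split_ifs with h1
  · have h2 := pow2_even_mod3 n
    have h3 : (2 ^ (2 * n) * u) % 3 = 1 := by
      rw [Nat.mul_mod, h2, h1]
    have h4 : 1 ≤ 2 ^ (2 * n) * u := by
      have : 0 < 2 ^ (2 * n) := Nat.pow_pos (by norm_num)
      nlinarith [Nat.pos_of_ne_zero (fun h => by simp [h] at h1 : u ≠ 0)]
    omega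
  · have h1' : u % 3 = 2 := by omega
    have h2 := pow2_odd_mod3 n hn
    have h3 : (2 ^ (2 * n - 1) * u) % 3 = 1 := by
      rw [Nat.mul_mod, h2, h1']
    have h4 : 1 ≤ 2 ^ (2 * n - 1) * u := by
      have : 0 < 2 ^ (2 * n - 1) := Nat.pow_pos (by norm_num)
      nlinarith [Nat.pos_of_ne_zero (fun h => by simp [h] at h1' : u ≠ 0)]
    omega

lemma two_pow_mul_odd_inj : ∀ a b u w : ℕ, Odd u → Odd w →
    2 ^ a * u = 2 ^ b * w → a = b ∧ u = w := by
  intro a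
  induction a with
  | zero =>
    intro b u w hu hw h
    cases b with
    | zero => simpa using h
    | succ c =>
      exfalso
      have : 2 ∣ u := by
        rw [show u = 2 ^ (c + 1) * w by simpa using h]
        exact Dvd.dvd.mul_right (dvd_pow_self 2 (Nat.succ_ne_zero c)) w
      have := Nat.odd_iff.mp hu
      omega
  | succ a ih =>
    intro b u w hu hw h
    cases b with
    | zero =>
      exfalso
      have : 2 ∣ w := by
        rw [show w = 2 ^ (a + 1) * u by simpa using h.symm]
        exact Dvd.dvd.mul_right (dvd_pow_self 2 (Nat.succ_ne_zero a)) u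
      have := Nat.odd_iff.mp hw
      omega
    | succ c =>
      have h' : 2 ^ a * u = 2 ^ c * w := by
        have : 2 * (2 ^ a * u) = 2 * (2 ^ c * w) := by
          rw [pow_succ] at h; ring_nf at h ⊢; linarith
        omega
      obtain ⟨h1, h2⟩ := ih c u w hu hw h'
      exact ⟨by omega, h2⟩

theorem stmt_13 (u w : ℕ) (hu : Odd u) (hw : Odd w) (hupos : 0 < u) (hwpos : 0 < w)
    (hu3 : u % 3 ≠ 0) (hw3 : w % 3 ≠ 0) (n m : ℕ) (hn : 0 < n) (hm : 0 < m)
    (h : invCollatzChild u n = invCollatzChild w m) : u = w ∧ n = m := by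
  have k1 := key u n hu3 hn
  have k2 := key w m hw3 hm
  have heq : 2 ^ (if u % 3 = 1 then 2 * n else 2 * n - 1) * u =
      2 ^ (if w % 3 = 1 then 2 * m else 2 * m - 1) * w := by
    rw [← k1, ← k2, h]
  obtain ⟨he, huw⟩ := two_pow_mul_odd_inj _ _ _ _ hu hw heq
  refine ⟨huw, ?_⟩
  subst huw
  split_ifs at he <;> omega
end
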